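/- Let T_{n,k} satisfy the staircase-tableau recurrence T_{n,k} = (k+1)T_{n-1,k} + (n+1)T_{n-1,k-1} + (n-k+1)T_{n-1,k-2}, with T_{0,0}=1 and T_{n,k}=0 unless 0 ≤ k ≤ n. Let A_{n,k} satisfy A_{n,k} = (1+k)A_{n-1,k} + (2n-2k+1)A_{n-1,k-1} with A_{0,0}=1 and A_{n,k}=0 unless 0 ≤ k ≤ n. Then for all n ≥ 0, the row-generating functions satisfy T_n(q) = (1+q)^n·A_n(q/(1+q)). -/
import Mathlib


open Polynomial

noncomputable def cc (m : ℕ) (i : ℤ) : ℝ := if 0 ≤ i then (m.choose i.toNat : ℝ) else 0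

lemma cc_neg (m : ℕ) (i : ℤ) (h : i < 0) : cc m i = 0 := by simp [cc, not_le.mpr h]

lemma cc_big (m : ℕ) (i : ℤ) (h : (m:ℤ) < i) : cc m i = 0 := by
  have h0 : 0 ≤ i := le_of_lt (lt_of_le_of_lt (Int.ofNat_nonneg m) h)
  have : m < i.toNat := by omega
  simp [cc, h0, Nat.choose_eq_zero_of_lt this]

lemma cc_nat (m t : ℕ) : cc m (t : ℤ) = (m.choose t : ℝ) := by simp [cc]

lemma cc_pascal (m : ℕ) (i : ℤ) : cc (m+1) i = cc m i + cc m (i-1) := by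
  rcases lt_trichotomy i 0 with h | h | h
  · rw [cc_neg _ _ h, cc_neg _ _ h, cc_neg _ _ (by omega)]; ring
  · subst h
    rw [cc_neg m (0-1) (by omega)]
    simp [cc]
  · obtain ⟨t, rfl⟩ : ∃ t : ℕ, i = (t:ℤ) + 1 := ⟨(i-1).toNat, by omega⟩
    have h1 : (t:ℤ) + 1 - 1 = (t:ℤ) := by ring
    have h2 : ((t:ℤ) + 1) = ((t+1 : ℕ) : ℤ) := by push_cast; ring
    rw [h1, h2, cc_nat, cc_nat, cc_nat, Nat.choose_succ_succ]
    push_cast; ring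

lemma cc_key (m : ℕ) (i : ℤ) : (i:ℝ) * cc m i = ((m:ℝ) - (i:ℝ) + 1) * cc m (i-1) := by
  rcases lt_trichotomy i 0 with h | h | h
  · rw [cc_neg _ _ h, cc_neg _ _ (by omega)]; ring
  · subst h; rw [cc_neg m (0-1) (by omega)]; simp
  · obtain ⟨t, rfl⟩ : ∃ t : ℕ, i = (t:ℤ) + 1 := ⟨(i-1).toNat, by omega⟩
    have h1 : (t:ℤ) + 1 - 1 = (t:ℤ) := by ring
    have h2 : ((t:ℤ) + 1) = ((t+1 : ℕ) : ℤ) := by push_cast; ring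
    rw [h1, h2, cc_nat, cc_nat]
    rcases le_or_gt t m with hle | hlt
    · have := Nat.choose_succ_right_eq m t
      have hc : (m.choose (t+1) * (t+1) : ℝ) = (m.choose t : ℝ) * ((m:ℝ) - t) := by
        rw [← Nat.cast_sub hle]; exact_mod_cast congrArg (Nat.cast : ℕ → ℝ) this
      push_cast
      push_cast at hc
      nlinarith [hc]
    · rw [Nat.choose_eq_zero_of_lt hlt, Nat.choose_eq_zero_of_lt (by omega)]
      simp

theorem staircase_tableaux_transformation
    (T A : ℕ → ℤ → ℝ)
    (hT0 : T 0 0 = 1)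
    (hTb : ∀ (n : ℕ) (k : ℤ), (k < 0 ∨ (n : ℤ) < k) → T n k = 0)
    (hTrec : ∀ (n : ℕ) (k : ℤ),
      T (n + 1) k =
        ((k : ℝ) + 1) * T n k + ((n : ℝ) + 1 + 1) * T n (k - 1) +
          ((n : ℝ) + 1 - (k : ℝ) + 1) * T n (k - 2))
    (hA0 : A 0 0 = 1)
    (hAb : ∀ (n : ℕ) (k : ℤ), (k < 0 ∨ (n : ℤ) < k) → A n k = 0)
    (hArec : ∀ (n : ℕ) (k : ℤ),
      A (n + 1) k =
        (1 + (k : ℝ)) * A n k + (2 * ((n : ℝ) + 1) - 2 * (k : ℝ) + 1) * A n (k - 1)) :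
    ∀ n : ℕ,
      (∑ k ∈ Finset.range (n + 1), C (T n (k : ℤ)) * X ^ k) =
        ∑ k ∈ Finset.range (n + 1), C (A n (k : ℤ)) * X ^ k * (1 + X) ^ (n - k) := by
  have hmain : ∀ (n : ℕ) (j : ℤ),
      T n j = ∑ k ∈ Finset.range (n+1), A n (k:ℤ) * cc (n-k) (j - (k:ℤ)) := by
    intro n
    induction n with
    | zero =>
      intro j
      simp only [zero_add, Finset.range_one, Finset.sum_singleton, Nat.cast_zero,
        Nat.sub_self, Nat.sub_zero, sub_zero]
      by_cases hj : j = 0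
      · subst hj; rw [hT0, hA0]; norm_num [cc]
      · rw [hTb 0 j (by omega)]
        rcases lt_or_gt_of_ne hj with h | h
        · rw [cc_neg _ _ (by omega)]; ring
        · rw [cc_big _ _ (by exact_mod_cast h)]; ring
    | succ n ih =>
      intro j
      have e1 : (∑ k ∈ Finset.range (n+1+1), A (n+1) (k:ℤ) * cc (n+1-k) (j - (k:ℤ)))
          = (∑ k ∈ Finset.range (n+1), (1+(k:ℝ)) * A n (k:ℤ) * cc (n+1-k) (j-(k:ℤ)))
          + (∑ k ∈ Finset.range (n+1),
              (2*((n:ℝ)+1) - 2*(k:ℝ) - 1) * A n (k:ℤ) * cc (n-k) (j-(k:ℤ)-1)) := by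
        calc (∑ k ∈ Finset.range (n+1+1), A (n+1) (k:ℤ) * cc (n+1-k) (j - (k:ℤ)))
            = ∑ k ∈ Finset.range (n+1+1),
                ((1+(k:ℝ)) * A n (k:ℤ) * cc (n+1-k) (j-(k:ℤ))
                 + (2*((n:ℝ)+1)-2*(k:ℝ)+1) * A n ((k:ℤ)-1) * cc (n+1-k) (j-(k:ℤ))) := by
              refine Finset.sum_congr rfl fun k _ => ?_
              rw [hArec n (k:ℤ)]; push_cast; ring
          _ = (∑ k ∈ Finset.range (n+1+1), (1+(k:ℝ)) * A n (k:ℤ) * cc (n+1-k) (j-(k:ℤ)))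
              + ∑ k ∈ Finset.range (n+1+1),
                  (2*((n:ℝ)+1)-2*(k:ℝ)+1) * A n ((k:ℤ)-1) * cc (n+1-k) (j-(k:ℤ)) :=
              Finset.sum_add_distrib
          _ = _ := by
              congr 1
              · rw [Finset.sum_range_succ,
                  hAb n (((n+1 : ℕ)):ℤ) (by right; push_cast; omega)]
                simp
              · rw [Finset.sum_range_succ',
                  hAb n (((0:ℕ):ℤ) - 1) (by left; omega)]
                simp only [mul_zero, zero_mul, add_zero]
                refine Finset.sum_congr rfl fun k _ => ?_
                have c1 : n + 1 - (k+1) = n - k := by omega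
                have c2 : ((k+1 : ℕ) : ℤ) - 1 = (k:ℤ) := by push_cast; ring
                have c3 : j - ((k+1:ℕ):ℤ) = j - (k:ℤ) - 1 := by push_cast; ring
                rw [c1, c2, c3]
                push_cast; ring
      rw [hTrec n j, ih j, ih (j-1), ih (j-2), e1, Finset.mul_sum, Finset.mul_sum,
        Finset.mul_sum, ← Finset.sum_add_distrib, ← Finset.sum_add_distrib,
        ← Finset.sum_add_distrib]
      refine Finset.sum_congr rfl fun k hk => ?_
      have hkn : k ≤ n := Nat.lt_succ_iff.mp (Finset.mem_range.mp hk)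
      have hnk : n + 1 - k = (n - k) + 1 := by omega
      rw [hnk, cc_pascal]
      have h1 := cc_key (n-k) (j - (k:ℤ))
      have h2 := cc_key (n-k) (j - (k:ℤ) - 1)
      have hc : ((n - k : ℕ) : ℝ) = (n:ℝ) - (k:ℝ) := by
        rw [Nat.cast_sub hkn]
      rw [hc] at h1 h2
      have e2 : j - 1 - (k:ℤ) = j - (k:ℤ) - 1 := by ring
      have e3 : j - 2 - (k:ℤ) = j - (k:ℤ) - 1 - 1 := by ring
      rw [e2, e3]
      push_cast at h1 h2 ⊢
      linear_combination (A n (k:ℤ)) * h1 - (A n (k:ℤ)) * h2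
  intro n
  apply Polynomial.ext
  intro m
  rw [Polynomial.finset_sum_coeff, Polynomial.finset_sum_coeff]
  have hL : (∑ k ∈ Finset.range (n+1), (C (T n (k:ℤ)) * X ^ k).coeff m) = T n (m:ℤ) := by
    have h : ∀ k ∈ Finset.range (n+1),
        (C (T n (k:ℤ)) * X ^ k).coeff m = if m = k then T n (k:ℤ) else 0 :=
      fun k _ => coeff_C_mul_X_pow _ _ _
    rw [Finset.sum_congr rfl h, Finset.sum_ite_eq]
    by_cases hm : m ∈ Finset.range (n+1)
    · simp [hm]
    · simp only [hm, if_false]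
      rw [hTb n (m:ℤ) (by right; simp only [Finset.mem_range] at hm; push_cast; omega)]
  have hR : (∑ k ∈ Finset.range (n+1), (C (A n (k:ℤ)) * X ^ k * (1+X)^(n-k)).coeff m)
      = ∑ k ∈ Finset.range (n+1), A n (k:ℤ) * cc (n-k) ((m:ℤ) - (k:ℤ)) := by
    refine Finset.sum_congr rfl fun k _ => ?_
    have hco : C (A n (k:ℤ)) * X ^ k * (1+X)^(n-k)
        = C (A n (k:ℤ)) * ((1+X)^(n-k) * X ^ k) := by ring
    rw [hco, coeff_C_mul, coeff_mul_X_pow']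
    by_cases h : k ≤ m
    · rw [if_pos h, coeff_one_add_X_pow]
      have : (m:ℤ) - (k:ℤ) = ((m - k : ℕ) : ℤ) := by omega
      rw [this, cc_nat]
    · rw [if_neg h, cc_neg _ _ (by omega)]
  rw [hL, hR]
  exact hmain n (m:ℤ)
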